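/- Let G' with weights w̃' be the dummy extension of a bipartite graph as above (dummy vertices in D ⊆ V⁻-side, each joined to all of V⁺ by weight-0 edges), let μ' be a perfect matching in G', and assume (G'_{μ'}, w̃'_{μ'}) has no negative cycle. Then for any two distinct dummy vertices v₁, v₂ ∈ D that are reachable from a fixed vertex s ∈ V⁺ in G'_{μ'}, the weight of a shortest directed path from s to v₁ equals the weight of a shortest directed path from s to v₂. -/

import Mathlib

/-!  Common setup: weighted bipartite graphs `G = (V⁺, V⁻; E)` with `V⁺ = α`, `V⁻ = β`,
edges directed from `V⁺` to `V⁻`, auxiliary graphs of matchings, walks and cycles. -/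

variable {α β : Type*}

/-- Directed adjacency of the auxiliary graph `G_μ`: non-matching edges go from `V⁺` to `V⁻`,
matching edges are reversed. -/
def auxAdj (E μ : Finset (α × β)) : α ⊕ β → α ⊕ β → Prop
  | Sum.inl u, Sum.inr v => (u, v) ∈ E ∧ (u, v) ∉ μ
  | Sum.inr v, Sum.inl u => (u, v) ∈ μ
  | _, _ => False

/-- The auxiliary weight `w_μ`, as a function on pairs of vertices. -/
def auxW (w : α × β → ℝ) : α ⊕ β → α ⊕ β → ℝ
  | Sum.inl u, Sum.inr v => w (u, v)
  | Sum.inr v, Sum.inl u => - w (u, v)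
  | _, _ => 0

/-- Weight of a walk, given by its list of vertices. -/
def walkWeight {V : Type*} (W : V → V → ℝ) (l : List V) : ℝ :=
  ((l.zip l.tail).map fun p => W p.1 p.2).sum

/-- A (simple) directed path from `s` to `t`, given by its list of vertices. -/
def IsDiPath {V : Type*} (adj : V → V → Prop) (s t : V) (l : List V) : Prop :=
  l.head? = some s ∧ l.getLast? = some t ∧ l.Chain' adj ∧ l.Nodup

/-- A (simple) directed cycle, given by the list of its vertices (the closing edge
from the last vertex back to the first is implicit). -/
def IsDiCycle {V : Type*} (adj : V → V → Prop) (l : List V) : Prop :=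
  l ≠ [] ∧ l.Nodup ∧ (l ++ l.take 1).Chain' adj

/-- Total auxiliary weight of a directed cycle (including the closing edge). -/
def cycleWeight {V : Type*} (W : V → V → ℝ) (l : List V) : ℝ :=
  walkWeight W (l ++ l.take 1)

/-- The underlying undirected edge of a dart of the auxiliary graph. -/
def undEdge : (α ⊕ β) × (α ⊕ β) → Option (α × β)
  | (Sum.inl u, Sum.inr v) => some (u, v)
  | (Sum.inr v, Sum.inl u) => some (u, v)
  | _ => none

/-- The set of underlying edges of `G` used by a walk in the auxiliary graph. -/
def usedEdges [DecidableEq α] [DecidableEq β] (l : List (α ⊕ β)) : Finset (α × β) :=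
  ((l.zip l.tail).filterMap undEdge).toFinset

/-- An edge set is a matching if every vertex appears at most once. -/
def IsMatching (μ : Finset (α × β)) : Prop :=
  ∀ e ∈ μ, ∀ f ∈ μ, (e.1 = f.1 ∨ e.2 = f.2) → e = f

/-- A perfect matching: a matching contained in `E` covering every vertex. -/
def IsPerfectMatching (E μ : Finset (α × β)) : Prop :=
  μ ⊆ E ∧ IsMatching μ ∧ (∀ u : α, ∃ v : β, (u, v) ∈ μ) ∧ (∀ v : β, ∃ u : α, (u, v) ∈ μ)

/-- The weight of a matching. -/
def matchingWeight (w : α × β → ℝ) (μ : Finset (α × β)) : ℝ := ∑ e ∈ μ, w e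

/-- A minimum-weight perfect matching. -/
def IsMinPerfectMatching (E : Finset (α × β)) (w : α × β → ℝ) (μ : Finset (α × β)) : Prop :=
  IsPerfectMatching E μ ∧
    ∀ ν : Finset (α × β), IsPerfectMatching E ν → matchingWeight w μ ≤ matchingWeight w ν

/-- `p` is a potential for `(G_μ, w_μ)`: all reduced weights are nonnegative. -/
def IsPotential (E μ : Finset (α × β)) (w : α × β → ℝ) (p : α ⊕ β → ℝ) : Prop :=
  ∀ x y : α ⊕ β, auxAdj E μ x y → auxW w x y + p x - p y ≥ 0

variable {γ : Type*}

/-- The edge set of the dummy extension `G'`: the original edges of `G` together with an edge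
from every vertex of `V⁺` to every dummy vertex (the dummy vertices form the type `γ`). -/
def extE [Fintype α] [Fintype γ] [DecidableEq α] [DecidableEq β] [DecidableEq γ]
    (E : Finset (α × β)) : Finset (α × (β ⊕ γ)) :=
  E.image (fun e => (e.1, Sum.inl e.2)) ∪
    Finset.univ.image (fun p : α × γ => (p.1, Sum.inr p.2))

/-- The weights of the dummy extension: original weights on original edges, `0` on dummy edges. -/
def extW (w : α × β → ℝ) : α × (β ⊕ γ) → ℝ
  | (u, Sum.inl v) => w (u, v)
  | (_, Sum.inr _) => 0

section Helpers

variable {V : Type*}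

lemma walkWeight_single (W : V → V → ℝ) (x : V) : walkWeight W [x] = 0 := rfl

lemma walkWeight_cons_cons (W : V → V → ℝ) (x y : V) (l : List V) :
    walkWeight W (x :: y :: l) = W x y + walkWeight W (y :: l) := by
  simp [walkWeight]

lemma walkWeight_append (W : V → V → ℝ) (a b : List V) (x : V) :
    walkWeight W (a ++ x :: b) = walkWeight W (a ++ [x]) + walkWeight W (x :: b) := by
  induction a with
  | nil => simp [walkWeight_single]
  | cons y a ih =>
    cases a with
    | nil => simp [walkWeight_cons_cons, walkWeight_single]
    | cons z a' =>
      simp only [List.cons_append, walkWeight_cons_cons] at *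
      rw [ih]; ring

lemma exists_dup_split {l : List V} (h : ¬ l.Nodup) :
    ∃ (a : List V) (v : V) (b c : List V), l = a ++ v :: b ++ v :: c := by
  induction l with
  | nil => simp at h
  | cons x xs ih =>
    by_cases hx : x ∈ xs
    · obtain ⟨b, c, rfl⟩ := List.append_of_mem hx
      exact ⟨[], x, b, c, rfl⟩
    · have hxs : ¬ xs.Nodup := fun hn => h (List.nodup_cons.mpr ⟨hx, hn⟩)
      obtain ⟨a, v, b, c, rfl⟩ := ih hxs
      exact ⟨x :: a, v, b, c, rfl⟩

lemma chain'_glue {adj : V → V → Prop} {a c : List V} {v : V}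
    (h1 : List.Chain' adj (a ++ [v])) (h2 : List.Chain' adj (v :: c)) :
    List.Chain' adj (a ++ v :: c) := by
  obtain ⟨hj, ht⟩ := List.isChain_cons.mp h2
  have he : a ++ v :: c = (a ++ [v]) ++ c := by simp
  rw [he]
  refine h1.append ht ?_
  intro x hx y hy
  rw [List.getLast?_concat] at hx
  cases hx
  exact hj y hy

lemma chain'_split {adj : V → V → Prop} {a c : List V} {v : V}
    (h : List.Chain' adj (a ++ v :: c)) :
    List.Chain' adj (a ++ [v]) ∧ List.Chain' adj (v :: c) :=
  ⟨h.prefix ⟨c, by simp⟩, h.suffix ⟨a, rfl⟩⟩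

lemma closedWalk_nonneg {adj : V → V → Prop} {W : V → V → ℝ}
    (H : ∀ C, IsDiCycle adj C → 0 ≤ cycleWeight W C)
    (n : ℕ) : ∀ b : List V, b.length ≤ n → ∀ x : V,
      List.Chain' adj (x :: b ++ [x]) → 0 ≤ walkWeight W (x :: b ++ [x]) := by
  induction n using Nat.strong_induction_on with
  | _ n ih =>
    intro b hb x hc
    by_cases hnd : (x :: b).Nodup
    · have hcyc : IsDiCycle adj (x :: b) := ⟨List.cons_ne_nil _ _, hnd, by simpa using hc⟩
      have := H _ hcyc
      simpa [cycleWeight] using this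
    · obtain ⟨a, v, b', c, heq⟩ := exists_dup_split hnd
      cases a with
      | nil =>
        simp only [List.nil_append, List.cons.injEq] at heq
        obtain ⟨rfl, rfl⟩ := heq
        simp only [List.append_eq] at hb hc ⊢
        have hfull : x :: (b' ++ x :: c) ++ [x] = (x :: b') ++ x :: (c ++ [x]) := by simp
        rw [hfull] at hc ⊢
        obtain ⟨h1, h2⟩ := chain'_split hc
        have hb'n : b'.length < n := by
          simp only [List.length_append, List.length_cons] at hb; omega
        have hcn : c.length < n := by
          simp only [List.length_append, List.length_cons] at hb; omega
        have hD := ih b'.length hb'n b' le_rfl x (by simpa using h1)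
        have hR := ih c.length hcn c le_rfl x (by simpa using h2)
        rw [walkWeight_append]
        simp only [List.cons_append] at hD hR ⊢
        linarith
      | cons y a' =>
        simp only [List.cons_append, List.cons.injEq] at heq
        obtain ⟨rfl, rfl⟩ := heq
        have hfull : x :: (a' ++ v :: b' ++ v :: c) ++ [x]
            = (x :: a') ++ v :: (b' ++ v :: (c ++ [x])) := by simp
        rw [hfull] at hc ⊢
        obtain ⟨h1, h2⟩ := chain'_split hc
        have h2' : List.Chain' adj ((v :: b') ++ v :: (c ++ [x])) := by simpa using h2
        obtain ⟨h3, h4⟩ := chain'_split h2'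
        have hb'n : b'.length < n := by
          simp only [List.length_append, List.length_cons] at hb; omega
        have hrn : (a' ++ v :: c).length < n := by
          simp only [List.length_append, List.length_cons] at hb ⊢; omega
        have hD := ih b'.length hb'n b' le_rfl v (by simpa using h3)
        have hRchain : List.Chain' adj (x :: (a' ++ v :: c) ++ [x]) := by
          have he : x :: (a' ++ v :: c) ++ [x] = (x :: a') ++ v :: (c ++ [x]) := by simp
          rw [he]
          exact chain'_glue h1 h4
        have hR := ih (a' ++ v :: c).length hrn (a' ++ v :: c) le_rfl x hRchain
        have e1 := walkWeight_append W (x :: a') (b' ++ v :: (c ++ [x])) v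
        have e2 : walkWeight W (v :: (b' ++ v :: (c ++ [x])))
            = walkWeight W (v :: b' ++ [v]) + walkWeight W (v :: (c ++ [x])) := by
          have := walkWeight_append W (v :: b') (c ++ [x]) v
          simpa using this
        have e3 : walkWeight W (x :: (a' ++ v :: c) ++ [x])
            = walkWeight W (x :: a' ++ [v]) + walkWeight W (v :: (c ++ [x])) := by
          have := walkWeight_append W (x :: a') (c ++ [x]) v
          have he : x :: (a' ++ v :: c) ++ [x] = (x :: a') ++ v :: (c ++ [x]) := by simp
          rw [he]
          simpa using this
        rw [e1, e2]
        rw [e3] at hR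
        linarith

lemma exists_path_of_walk {adj : V → V → Prop} {W : V → V → ℝ}
    (H : ∀ C, IsDiCycle adj C → 0 ≤ cycleWeight W C)
    (n : ℕ) : ∀ l : List V, l.length ≤ n → ∀ s t : V, List.Chain' adj l →
      l.head? = some s → l.getLast? = some t →
      ∃ l', IsDiPath adj s t l' ∧ walkWeight W l' ≤ walkWeight W l := by
  induction n using Nat.strong_induction_on with
  | _ n ih =>
    intro l hl s t hc hh ht
    by_cases hnd : l.Nodup
    · exact ⟨l, ⟨hh, ht, hc, hnd⟩, le_refl _⟩
    · obtain ⟨a, v, b, c, rfl⟩ := exists_dup_split hnd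
      -- l = a ++ v :: (b ++ v :: c)
      obtain ⟨h1, h2⟩ := chain'_split (a := a) (v := v) (c := b ++ v :: c) (by simpa using hc)
      have h2' : List.Chain' adj ((v :: b) ++ v :: c) := by simpa using h2
      obtain ⟨h3, h4⟩ := chain'_split h2'
      -- the removed closed walk
      have hD : 0 ≤ walkWeight W (v :: b ++ [v]) :=
        closedWalk_nonneg H b.length b le_rfl v (by simpa using h3)
      -- the shortened walk R = a ++ v :: c
      have hRchain : List.Chain' adj (a ++ v :: c) := chain'_glue h1 h4
      have hRhead : (a ++ v :: c).head? = some s := by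
        cases a with
        | nil => simpa using hh
        | cons y a' => simpa using hh
      have hRlast : (a ++ v :: c).getLast? = some t := by
        rcases List.eq_nil_or_concat c with rfl | ⟨c', z, rfl⟩
        · have : (a ++ v :: b ++ v :: ([] : List V)).getLast? = some v := by
            have : a ++ v :: b ++ v :: ([] : List V) = (a ++ v :: b) ++ [v] := by simp
            rw [this, List.getLast?_concat]
          rw [this] at ht
          have : (a ++ [v]).getLast? = some v := List.getLast?_concat
          simpa using this.trans ht
        · simp only [List.concat_eq_append] at ht ⊢
          have e : a ++ v :: b ++ v :: (c' ++ [z]) = (a ++ v :: b ++ v :: c') ++ [z] := by simp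
          rw [e, List.getLast?_concat] at ht
          have e2 : a ++ v :: (c' ++ [z]) = (a ++ v :: c') ++ [z] := by simp
          rw [e2, List.getLast?_concat, ht]
      have hRlen : (a ++ v :: c).length < n := by
        have := hl
        simp only [List.length_append, List.length_cons] at this ⊢
        omega
      obtain ⟨l', hp, hw⟩ := ih (a ++ v :: c).length hRlen (a ++ v :: c) le_rfl s t
        hRchain hRhead hRlast
      refine ⟨l', hp, hw.trans ?_⟩
      have e1 := walkWeight_append W a (b ++ v :: c) v
      have e2 : walkWeight W (v :: (b ++ v :: c))
          = walkWeight W (v :: b ++ [v]) + walkWeight W (v :: c) := by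
        have := walkWeight_append W (v :: b) c v
        simpa using this
      have e3 := walkWeight_append W a c v
      have e0 : walkWeight W (a ++ v :: b ++ v :: c)
          = walkWeight W (a ++ v :: (b ++ v :: c)) := by
        congr 1; simp
      rw [e0, e1, e2, e3]
      linarith

end Helpers

/-- In the dummy extension with weights `w̃'` (dummy edges of weight `0`), with
`μ'` a perfect matching and no negative cycle in `(G'_{μ'}, w̃'_{μ'})`: for any two distinct
dummy vertices `d₁, d₂` reachable from a fixed `s ∈ V⁺` in `G'_{μ'}`, the weight of a shortest
directed path from `s` to `d₁` equals that of a shortest directed path from `s` to `d₂`. -/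



theorem shortest_path_weights_to_dummies_equal
    [Fintype α] [Fintype β] [Fintype γ] [DecidableEq α] [DecidableEq β] [DecidableEq γ]
    (E : Finset (α × β)) (w : α × β → ℝ) (μ' : Finset (α × (β ⊕ γ))) (s : α)
    (tw : α × (β ⊕ γ) → ℝ)
    (hbal : Fintype.card β < Fintype.card α)
    (hγ : Fintype.card γ = Fintype.card α - Fintype.card β)
    (hw : ∀ e ∈ E, w e ≤ 0)
    (hμ' : IsPerfectMatching (extE (γ := γ) E) μ')
    (htw : ∀ e ∈ extE (γ := γ) E, e.1 ≠ s → tw e = extW w e)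
    (htwd : ∀ (u : α) (d : γ), tw (u, Sum.inr d) = 0)
    (hnoneg : ∀ C : List (α ⊕ (β ⊕ γ)),
      IsDiCycle (auxAdj (extE (γ := γ) E) μ') C → 0 ≤ cycleWeight (auxW tw) C) :
    ∀ d₁ d₂ : γ, d₁ ≠ d₂ →
      (∃ l : List (α ⊕ (β ⊕ γ)),
        IsDiPath (auxAdj (extE (γ := γ) E) μ') (Sum.inl s) (Sum.inr (Sum.inr d₁)) l) →
      (∃ l : List (α ⊕ (β ⊕ γ)),
        IsDiPath (auxAdj (extE (γ := γ) E) μ') (Sum.inl s) (Sum.inr (Sum.inr d₂)) l) →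
      ∀ l₁ l₂ : List (α ⊕ (β ⊕ γ)),
        (IsDiPath (auxAdj (extE (γ := γ) E) μ') (Sum.inl s) (Sum.inr (Sum.inr d₁)) l₁ ∧
          ∀ l' : List (α ⊕ (β ⊕ γ)),
            IsDiPath (auxAdj (extE (γ := γ) E) μ') (Sum.inl s) (Sum.inr (Sum.inr d₁)) l' →
            walkWeight (auxW tw) l₁ ≤ walkWeight (auxW tw) l') →
        (IsDiPath (auxAdj (extE (γ := γ) E) μ') (Sum.inl s) (Sum.inr (Sum.inr d₂)) l₂ ∧
          ∀ l' : List (α ⊕ (β ⊕ γ)),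
            IsDiPath (auxAdj (extE (γ := γ) E) μ') (Sum.inl s) (Sum.inr (Sum.inr d₂)) l' →
            walkWeight (auxW tw) l₂ ≤ walkWeight (auxW tw) l') →
        walkWeight (auxW tw) l₁ = walkWeight (auxW tw) l₂ := by
  
  intro d₁ d₂ hne _ _ l₁ l₂ h₁ h₂
  obtain ⟨hp₁, hmin₁⟩ := h₁
  obtain ⟨hp₂, hmin₂⟩ := h₂
  have key : ∀ d d' : γ, d ≠ d' → ∀ l l' : List (α ⊕ (β ⊕ γ)),
      IsDiPath (auxAdj (extE (γ := γ) E) μ') (Sum.inl s) (Sum.inr (Sum.inr d)) l →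
      (∀ m : List (α ⊕ (β ⊕ γ)),
        IsDiPath (auxAdj (extE (γ := γ) E) μ') (Sum.inl s) (Sum.inr (Sum.inr d)) m →
        walkWeight (auxW tw) l ≤ walkWeight (auxW tw) m) →
      IsDiPath (auxAdj (extE (γ := γ) E) μ') (Sum.inl s) (Sum.inr (Sum.inr d')) l' →
      walkWeight (auxW tw) l ≤ walkWeight (auxW tw) l' := by
    intro d d' hdd l l' hl hmin hl'
    obtain ⟨hh', htl', hc', hnd'⟩ := hl'
    -- mate of d'
    obtain ⟨u, hu⟩ := hμ'.2.2.2 (Sum.inr d')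
    -- decompose l' as m ++ [inr (inr d')]
    obtain ⟨m, rfl⟩ := List.getLast?_eq_some_iff.mp htl'
    -- the extended walk
    set z : α ⊕ (β ⊕ γ) := Sum.inr (Sum.inr d') with hz
    have hadj1 : auxAdj (extE (γ := γ) E) μ' z (Sum.inl u) := hu
    have hadj2 : auxAdj (extE (γ := γ) E) μ' (Sum.inl u) (Sum.inr (Sum.inr d)) := by
      constructor
      · exact Finset.mem_union_right _ (Finset.mem_image.mpr ⟨(u, d), Finset.mem_univ _, rfl⟩)
      · intro hmem
        have := hμ'.2.1 _ hmem _ hu (Or.inl rfl)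
        simp only [Prod.mk.injEq] at this
        exact hdd (by simpa using this.2)
    have hLchain : List.Chain' (auxAdj (extE (γ := γ) E) μ')
        (m ++ z :: [Sum.inl u, Sum.inr (Sum.inr d)]) := by
      apply chain'_glue
      · exact hc'
      · exact List.isChain_cons_cons.mpr ⟨hadj1, List.isChain_pair.mpr hadj2⟩
    have hLhead : (m ++ z :: [Sum.inl u, Sum.inr (Sum.inr d)]).head? = some (Sum.inl s) := by
      cases m with
      | nil =>
        -- then l' = [z], but head l' = inl s ≠ z; contradiction
        simp only [List.nil_append, List.head?_cons] at hh' ⊢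
        exact hh'
      | cons y m' => simpa using hh'
    have hLlast : (m ++ z :: [Sum.inl u, Sum.inr (Sum.inr d)]).getLast?
        = some (Sum.inr (Sum.inr d)) := by
      have : m ++ z :: [Sum.inl u, Sum.inr (Sum.inr d)]
          = (m ++ [z, Sum.inl u]) ++ [Sum.inr (Sum.inr d)] := by simp
      rw [this, List.getLast?_concat]
    obtain ⟨P, hP, hPw⟩ := exists_path_of_walk hnoneg
      (m ++ z :: [Sum.inl u, Sum.inr (Sum.inr d)]).length
      (m ++ z :: [Sum.inl u, Sum.inr (Sum.inr d)]) le_rfl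
      (Sum.inl s) (Sum.inr (Sum.inr d)) hLchain hLhead hLlast
    have hwL : walkWeight (auxW tw) (m ++ z :: [Sum.inl u, Sum.inr (Sum.inr d)])
        = walkWeight (auxW tw) (m ++ [z]) := by
      rw [walkWeight_append]
      have : walkWeight (auxW tw) [z, Sum.inl u, Sum.inr (Sum.inr d)] = 0 := by
        rw [walkWeight_cons_cons, walkWeight_cons_cons, walkWeight_single]
        simp only [hz, auxW, htwd]
        ring
      rw [this]; ring
    calc walkWeight (auxW tw) l ≤ walkWeight (auxW tw) P := hmin P hP
      _ ≤ _ := hPw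
      _ = walkWeight (auxW tw) (m ++ [z]) := hwL
  exact le_antisymm (key d₁ d₂ hne l₁ l₂ hp₁ hmin₁ hp₂)
    (key d₂ d₁ (Ne.symm hne) l₂ l₁ hp₂ hmin₂ hp₁)
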